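/- Let K be a field of characteristic 0, F = FractionRing (MvPolynomial (Fin 2) K) the field of rational functions K(x₁, x₂), and let ∂₁, ∂₂ ∈ Der_K(F) be the K-derivations of F extending the partial derivatives ∂/∂x₁, ∂/∂x₂ of the polynomial ring. Then the K-linear span of the eight derivations ∂₁, ∂₂, x₁ • ∂₁, x₂ • ∂₂, x₁ • ∂₂, x₂ • ∂₁, x₁² • ∂₁ + x₁x₂ • ∂₂, and x₁x₂ • ∂₁ + x₂² • ∂₂ is a Lie subalgebra of Der_K(F) of dimension 8 over K that is isomorphic, as a Lie algebra over K, to sl₃(K); consequently there is an injective homomorphism of Lie algebras over K from sl₃(K) into Der_K(F). -/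

import Mathlib

/-- The `K`-linear span of the eight derivations `∂₁`, `∂₂`, `x₁ • ∂₁`, `x₂ • ∂₂`, `x₁ • ∂₂`,
`x₂ • ∂₁`, `x₁² • ∂₁ + x₁x₂ • ∂₂` and `x₁x₂ • ∂₁ + x₂² • ∂₂` inside
`Der_K(K(x₁, x₂))`. -/
noncomputable def sl3DerivationSpan (K : Type) [Field K] [CharZero K]
    (D₁ D₂ : Derivation K (FractionRing (MvPolynomial (Fin 2) K))
      (FractionRing (MvPolynomial (Fin 2) K))) :
    Submodule K (Derivation K (FractionRing (MvPolynomial (Fin 2) K))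
      (FractionRing (MvPolynomial (Fin 2) K))) :=
  let x : Fin 2 → FractionRing (MvPolynomial (Fin 2) K) := fun i =>
    algebraMap (MvPolynomial (Fin 2) K) (FractionRing (MvPolynomial (Fin 2) K))
      (MvPolynomial.X i)
  Submodule.span K {D₁, D₂, x 0 • D₁, x 1 • D₂, x 0 • D₂, x 1 • D₁,
    (x 0 ^ 2) • D₁ + (x 0 * x 1) • D₂, (x 0 * x 1) • D₁ + (x 1 ^ 2) • D₂}

namespace Sl3Aux
open MvPolynomial LieAlgebra.SpecialLinear

set_option linter.unusedSectionVars false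

variable (K : Type) [Field K] [CharZero K]

noncomputable abbrev FF := FractionRing (MvPolynomial (Fin 2) K)
noncomputable def xx (i : Fin 2) : FF K := algebraMap (MvPolynomial (Fin 2) K) (FF K) (X i)
noncomputable abbrev cc : K →+* FF K := algebraMap K (FF K)

theorem cc_C (a : K) : algebraMap (MvPolynomial (Fin 2) K) (FF K) (C a) = cc K a := by
  rw [← MvPolynomial.algebraMap_eq, ← IsScalarTower.algebraMap_apply]

/-- Two derivations of `K(x₁,x₂)` agreeing on the generators agree everywhere. -/
theorem der_ext (D E : Derivation K (FF K) (FF K))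
    (g0 : D (xx K 0) = E (xx K 0)) (g1 : D (xx K 1) = E (xx K 1)) : D = E := by
  have key : ∀ p : MvPolynomial (Fin 2) K,
      D (algebraMap (MvPolynomial (Fin 2) K) (FF K) p) =
      E (algebraMap (MvPolynomial (Fin 2) K) (FF K) p) := by
    intro p
    induction p using MvPolynomial.induction_on with
    | C a => rw [cc_C, Derivation.map_algebraMap, Derivation.map_algebraMap]
    | add p q hp hq => rw [RingHom.map_add, Derivation.map_add, Derivation.map_add, hp, hq]
    | mul_X p i hp =>
        have hX : D (algebraMap (MvPolynomial (Fin 2) K) (FF K) (X i)) =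
            E (algebraMap (MvPolynomial (Fin 2) K) (FF K) (X i)) := by
          fin_cases i
          · exact g0
          · exact g1
        rw [map_mul, Derivation.leibniz, Derivation.leibniz, hp, hX]
  ext f
  obtain ⟨⟨p, s⟩, rfl⟩ := IsLocalization.mk'_surjective (nonZeroDivisors (MvPolynomial (Fin 2) K)) f
  have hs : algebraMap (MvPolynomial (Fin 2) K) (FF K) (s : MvPolynomial (Fin 2) K) ≠ 0 := by
    refine fun h => nonZeroDivisors.coe_ne_zero s ?_
    exact IsFractionRing.injective (MvPolynomial (Fin 2) K) (FF K) (by rw [h, map_zero])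
  have hmk : algebraMap (MvPolynomial (Fin 2) K) (FF K) (s : MvPolynomial (Fin 2) K) *
      IsLocalization.mk' (FF K) p s = algebraMap (MvPolynomial (Fin 2) K) (FF K) p :=
    IsLocalization.mk'_spec' _ p s
  have hD := congrArg D hmk
  have hE := congrArg E hmk
  rw [Derivation.leibniz, smul_eq_mul, smul_eq_mul] at hD hE
  simp only [key] at hD
  exact mul_left_cancel₀ hs (add_right_cancel (hD.trans hE.symm))

noncomputable def f1 (A : Matrix (Fin 3) (Fin 3) K) : FF K :=
  cc K (A 0 1) * xx K 0 ^ 2 + cc K (A 0 2) * (xx K 0 * xx K 1)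
    - cc K (A 1 0) - cc K (A 1 1 - A 0 0) * xx K 0 - cc K (A 1 2) * xx K 1

noncomputable def f2 (A : Matrix (Fin 3) (Fin 3) K) : FF K :=
  cc K (A 0 1) * (xx K 0 * xx K 1) + cc K (A 0 2) * xx K 1 ^ 2
    - cc K (A 2 0) - cc K (A 2 1) * xx K 0 - cc K (A 2 2 - A 0 0) * xx K 1

variable (D₁ D₂ : Derivation K (FF K) (FF K))

noncomputable def psi (A : Matrix (Fin 3) (Fin 3) K) : Derivation K (FF K) (FF K) :=
  f1 K A • D₁ + f2 K A • D₂

variable (h₁ : ∀ p : MvPolynomial (Fin 2) K,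
      D₁ (algebraMap (MvPolynomial (Fin 2) K) (FF K) p) =
        algebraMap (MvPolynomial (Fin 2) K) (FF K) (MvPolynomial.pderiv 0 p))
    (h₂ : ∀ p : MvPolynomial (Fin 2) K,
      D₂ (algebraMap (MvPolynomial (Fin 2) K) (FF K) p) =
        algebraMap (MvPolynomial (Fin 2) K) (FF K) (MvPolynomial.pderiv 1 p))

include h₁ in
theorem D1x0 : D₁ (xx K 0) = 1 := by rw [xx, h₁]; simp
include h₁ in
theorem D1x1 : D₁ (xx K 1) = 0 := by rw [xx, h₁]; simp [pderiv_X_of_ne]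
include h₂ in
theorem D2x0 : D₂ (xx K 0) = 0 := by rw [xx, h₂]; simp [pderiv_X_of_ne]
include h₂ in
theorem D2x1 : D₂ (xx K 1) = 1 := by rw [xx, h₂]; simp

include h₁ h₂ in
theorem psi_apply_x0 (A : Matrix (Fin 3) (Fin 3) K) : psi K D₁ D₂ A (xx K 0) = f1 K A := by
  simp [psi, Derivation.add_apply, Derivation.smul_apply, D1x0 K D₁ h₁, D2x0 K D₂ h₂,
    smul_eq_mul]

include h₁ h₂ in
theorem psi_apply_x1 (A : Matrix (Fin 3) (Fin 3) K) : psi K D₁ D₂ A (xx K 1) = f2 K A := by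
  simp [psi, Derivation.add_apply, Derivation.smul_apply, D1x1 K D₁ h₁, D2x1 K D₂ h₂,
    smul_eq_mul]

set_option maxHeartbeats 2000000 in
include h₁ h₂ in
theorem psi_bracket (A B : Matrix (Fin 3) (Fin 3) K) :
    psi K D₁ D₂ (A * B - B * A) = ⁅psi K D₁ D₂ A, psi K D₁ D₂ B⁆ := by
  apply der_ext
  · rw [Derivation.commutator_apply, psi_apply_x0 K D₁ D₂ h₁ h₂,
      psi_apply_x0 K D₁ D₂ h₁ h₂, psi_apply_x0 K D₁ D₂ h₁ h₂]
    simp only [psi, f1, f2, Derivation.add_apply, Derivation.smul_apply, pow_two,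
      Derivation.map_sub, Derivation.map_add, Derivation.leibniz,
      Derivation.map_algebraMap, smul_eq_mul,
      D1x0 K D₁ h₁, D1x1 K D₁ h₁, D2x0 K D₂ h₂, D2x1 K D₂ h₂,
      Matrix.sub_apply, Matrix.mul_apply, Fin.sum_univ_three,
      map_sub, map_add, map_mul]
    ring
  · rw [Derivation.commutator_apply, psi_apply_x1 K D₁ D₂ h₁ h₂,
      psi_apply_x1 K D₁ D₂ h₁ h₂, psi_apply_x1 K D₁ D₂ h₁ h₂]
    simp only [psi, f1, f2, Derivation.add_apply, Derivation.smul_apply, pow_two,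
      Derivation.map_sub, Derivation.map_add, Derivation.leibniz,
      Derivation.map_algebraMap, smul_eq_mul,
      D1x0 K D₁ h₁, D1x1 K D₁ h₁, D2x0 K D₂ h₂, D2x1 K D₂ h₂,
      Matrix.sub_apply, Matrix.mul_apply, Fin.sum_univ_three,
      map_sub, map_add, map_mul]
    ring

theorem f1_add (A B : Matrix (Fin 3) (Fin 3) K) : f1 K (A + B) = f1 K A + f1 K B := by
  simp only [f1, Matrix.add_apply, map_add, map_sub]; ring

theorem f2_add (A B : Matrix (Fin 3) (Fin 3) K) : f2 K (A + B) = f2 K A + f2 K B := by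
  simp only [f2, Matrix.add_apply, map_add, map_sub]; ring

theorem f1_smul (k : K) (A : Matrix (Fin 3) (Fin 3) K) : f1 K (k • A) = cc K k * f1 K A := by
  simp only [f1, Matrix.smul_apply, smul_eq_mul, map_mul, map_sub, map_add]; ring

theorem f2_smul (k : K) (A : Matrix (Fin 3) (Fin 3) K) : f2 K (k • A) = cc K k * f2 K A := by
  simp only [f2, Matrix.smul_apply, smul_eq_mul, map_mul, map_sub, map_add]; ring

theorem psi_add (A B : Matrix (Fin 3) (Fin 3) K) :
    psi K D₁ D₂ (A + B) = psi K D₁ D₂ A + psi K D₁ D₂ B := by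
  rw [psi, psi, psi, f1_add, f2_add, add_smul, add_smul]; abel

theorem psi_smul (k : K) (A : Matrix (Fin 3) (Fin 3) K) :
    psi K D₁ D₂ (k • A) = k • psi K D₁ D₂ A := by
  rw [psi, psi, f1_smul, f2_smul, mul_smul, mul_smul, ← smul_add, algebraMap_smul]

/-- The Lie algebra morphism from `sl₃` to derivations of `K(x₁,x₂)`. -/
noncomputable def psiSl : sl (Fin 3) K →ₗ⁅K⁆
    Derivation K (FF K) (FF K) where
  toFun A := psi K D₁ D₂ A.val
  map_add' A B := psi_add K D₁ D₂ A.val B.val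
  map_smul' k A := psi_smul K D₁ D₂ k A.val
  map_lie' {A B} := by
    show psi K D₁ D₂ (⁅A, B⁆ : sl (Fin 3) K).val = ⁅psi K D₁ D₂ A.val, psi K D₁ D₂ B.val⁆
    rw [sl_bracket]
    exact psi_bracket K D₁ D₂ h₁ h₂ A.val B.val

include h₁ h₂ in
theorem psi_inj (A : Matrix (Fin 3) (Fin 3) K) (tr : Matrix.trace A = 0)
    (h : psi K D₁ D₂ A = 0) : A = 0 := by
  have e1 : f1 K A = 0 := by
    rw [← psi_apply_x0 K D₁ D₂ h₁ h₂ A, h]; rfl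
  have e2 : f2 K A = 0 := by
    rw [← psi_apply_x1 K D₁ D₂ h₁ h₂ A, h]; rfl
  have p1 : (C (A 0 1) * X 0 ^ 2 + C (A 0 2) * (X 0 * X 1) - C (A 1 0)
      - C (A 1 1 - A 0 0) * X 0 - C (A 1 2) * X 1 : MvPolynomial (Fin 2) K) = 0 := by
    apply IsFractionRing.injective (MvPolynomial (Fin 2) K) (FF K)
    rw [map_zero, ← e1]
    simp only [f1, xx, map_add, map_sub, map_mul, map_pow, cc_C]
  have p2 : (C (A 0 1) * (X 0 * X 1) + C (A 0 2) * X 1 ^ 2 - C (A 2 0)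
      - C (A 2 1) * X 0 - C (A 2 2 - A 0 0) * X 1 : MvPolynomial (Fin 2) K) = 0 := by
    apply IsFractionRing.injective (MvPolynomial (Fin 2) K) (FF K)
    rw [map_zero, ← e2]
    simp only [f2, xx, map_add, map_sub, map_mul, map_pow, cc_C]
  have ev1 : ∀ a b : K,
      A 0 1 * a^2 + A 0 2 * (a*b) - A 1 0 - (A 1 1 - A 0 0)*a - A 1 2*b = 0 := by
    intro a b
    have := congrArg (aeval (![a,b] : Fin 2 → K)) p1
    simp [map_sub, map_add, map_mul, map_pow] at this
    linear_combination this
  have ev2 : ∀ a b : K,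
      A 0 1 * (a*b) + A 0 2 * b^2 - A 2 0 - A 2 1*a - (A 2 2 - A 0 0)*b = 0 := by
    intro a b
    have := congrArg (aeval (![a,b] : Fin 2 → K)) p2
    simp [map_sub, map_add, map_mul, map_pow] at this
    linear_combination this
  have tr' : A 0 0 + A 1 1 + A 2 2 = 0 := by
    simpa [Matrix.trace, Fin.sum_univ_three] using tr
  have h10 : A 1 0 = 0 := by linear_combination -ev1 0 0
  have h01 : A 0 1 = 0 := by linear_combination (ev1 1 0 + ev1 (-1) 0)/2 + h10
  have h11 : A 1 1 = A 0 0 := by linear_combination (ev1 (-1) 0 - ev1 1 0)/2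
  have h12 : A 1 2 = 0 := by linear_combination -ev1 0 1 - h10
  have h02 : A 0 2 = 0 := by linear_combination ev1 1 1 - ev1 1 0 + h12
  have h20 : A 2 0 = 0 := by linear_combination -ev2 0 0
  have h22 : A 2 2 = A 0 0 := by linear_combination (ev2 0 (-1) - ev2 0 1)/2
  have h21 : A 2 1 = 0 := by linear_combination -ev2 1 0 - h20
  have h00 : A 0 0 = 0 := by linear_combination (tr' - h11 - h22)/3
  ext i j
  rw [Matrix.zero_apply]
  fin_cases i <;> fin_cases j
  · exact h00
  · exact h01
  · exact h02
  · exact h10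
  · exact h11.trans h00
  · exact h12
  · exact h20
  · exact h21
  · exact h22.trans h00

set_option maxHeartbeats 1000000 in
include h₁ h₂ in
theorem psi_combo (A : Matrix (Fin 3) (Fin 3) K) :
    psi K D₁ D₂ A =
      (-(A 1 0)) • D₁ + (-(A 2 0)) • D₂ + (A 0 0 - A 1 1) • (xx K 0 • D₁)
      + (A 0 0 - A 2 2) • (xx K 1 • D₂) + (-(A 2 1)) • (xx K 0 • D₂)
      + (-(A 1 2)) • (xx K 1 • D₁)
      + (A 0 1) • ((xx K 0 ^ 2) • D₁ + (xx K 0 * xx K 1) • D₂)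
      + (A 0 2) • ((xx K 0 * xx K 1) • D₁ + (xx K 1 ^ 2) • D₂) := by
  apply der_ext
  · rw [psi_apply_x0 K D₁ D₂ h₁ h₂ A]
    simp only [f1, Derivation.add_apply, Derivation.smul_apply,
      D1x0 K D₁ h₁, D1x1 K D₁ h₁, D2x0 K D₂ h₂, D2x1 K D₂ h₂, smul_eq_mul,
      Algebra.smul_def, map_sub, map_neg, map_add]
    ring
  · rw [psi_apply_x1 K D₁ D₂ h₁ h₂ A]
    simp only [f2, Derivation.add_apply, Derivation.smul_apply,
      D1x0 K D₁ h₁, D1x1 K D₁ h₁, D2x0 K D₂ h₂, D2x1 K D₂ h₂, smul_eq_mul,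
      Algebra.smul_def, map_sub, map_neg, map_add]
    ring

theorem psi_g1 : psi K D₁ D₂ !![0,0,0;-1,0,0;0,0,0] = D₁ := by
  have hf1 : f1 K !![0,0,0;-1,0,0;0,0,0] = 1 := by
    norm_num [f1, Matrix.vecHead, Matrix.vecTail, Matrix.cons_val_two]
  have hf2 : f2 K !![0,0,0;-1,0,0;0,0,0] = 0 := by
    norm_num [f2, Matrix.vecHead, Matrix.vecTail, Matrix.cons_val_two]
  rw [psi, hf1, hf2, one_smul, zero_smul, add_zero]
theorem psi_g2 : psi K D₁ D₂ !![0,0,0;0,0,0;-1,0,0] = D₂ := by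
  have hf1 : f1 K !![0,0,0;0,0,0;-1,0,0] = 0 := by
    norm_num [f1, Matrix.vecHead, Matrix.vecTail, Matrix.cons_val_two]
  have hf2 : f2 K !![0,0,0;0,0,0;-1,0,0] = 1 := by
    norm_num [f2, Matrix.vecHead, Matrix.vecTail, Matrix.cons_val_two]
  rw [psi, hf1, hf2, one_smul, zero_smul, zero_add]
theorem psi_g3 : psi K D₁ D₂ !![1/3,0,0;0,-2/3,0;0,0,1/3] = xx K 0 • D₁ := by
  have hf1 : f1 K !![1/3,0,0;0,-2/3,0;0,0,1/3] = xx K 0 := by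
    rw [f1]; norm_num [Matrix.vecHead, Matrix.vecTail, Matrix.cons_val_two]
  have hf2 : f2 K !![1/3,0,0;0,-2/3,0;0,0,1/3] = 0 := by
    rw [f2]; norm_num [Matrix.vecHead, Matrix.vecTail, Matrix.cons_val_two]
  rw [psi, hf1, hf2, zero_smul, add_zero]
theorem psi_g4 : psi K D₁ D₂ !![1/3,0,0;0,1/3,0;0,0,-2/3] = xx K 1 • D₂ := by
  have hf1 : f1 K !![1/3,0,0;0,1/3,0;0,0,-2/3] = 0 := by
    rw [f1]; norm_num [Matrix.vecHead, Matrix.vecTail, Matrix.cons_val_two]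
  have hf2 : f2 K !![1/3,0,0;0,1/3,0;0,0,-2/3] = xx K 1 := by
    rw [f2]; norm_num [Matrix.vecHead, Matrix.vecTail, Matrix.cons_val_two]
  rw [psi, hf1, hf2, zero_smul, zero_add]
theorem psi_g5 : psi K D₁ D₂ !![0,0,0;0,0,0;0,-1,0] = xx K 0 • D₂ := by
  have hf1 : f1 K !![0,0,0;0,0,0;0,-1,0] = 0 := by
    rw [f1]; norm_num [Matrix.vecHead, Matrix.vecTail, Matrix.cons_val_two]
  have hf2 : f2 K !![0,0,0;0,0,0;0,-1,0] = xx K 0 := by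
    rw [f2]; norm_num [Matrix.vecHead, Matrix.vecTail, Matrix.cons_val_two]
  rw [psi, hf1, hf2, zero_smul, zero_add]
theorem psi_g6 : psi K D₁ D₂ !![0,0,0;0,0,-1;0,0,0] = xx K 1 • D₁ := by
  have hf1 : f1 K !![0,0,0;0,0,-1;0,0,0] = xx K 1 := by
    rw [f1]; norm_num [Matrix.vecHead, Matrix.vecTail, Matrix.cons_val_two]
  have hf2 : f2 K !![0,0,0;0,0,-1;0,0,0] = 0 := by
    rw [f2]; norm_num [Matrix.vecHead, Matrix.vecTail, Matrix.cons_val_two]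
  rw [psi, hf1, hf2, zero_smul, add_zero]
theorem psi_g7 : psi K D₁ D₂ !![0,1,0;0,0,0;0,0,0] =
    (xx K 0 ^ 2) • D₁ + (xx K 0 * xx K 1) • D₂ := by
  have hf1 : f1 K !![0,1,0;0,0,0;0,0,0] = xx K 0 ^ 2 := by
    rw [f1]; norm_num [Matrix.vecHead, Matrix.vecTail, Matrix.cons_val_two]
  have hf2 : f2 K !![0,1,0;0,0,0;0,0,0] = xx K 0 * xx K 1 := by
    rw [f2]; norm_num [Matrix.vecHead, Matrix.vecTail, Matrix.cons_val_two]
  rw [psi, hf1, hf2]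
theorem psi_g8 : psi K D₁ D₂ !![0,0,1;0,0,0;0,0,0] =
    (xx K 0 * xx K 1) • D₁ + (xx K 1 ^ 2) • D₂ := by
  have hf1 : f1 K !![0,0,1;0,0,0;0,0,0] = xx K 0 * xx K 1 := by
    rw [f1]; norm_num [Matrix.vecHead, Matrix.vecTail, Matrix.cons_val_two]
  have hf2 : f2 K !![0,0,1;0,0,0;0,0,0] = xx K 1 ^ 2 := by
    rw [f2]; norm_num [Matrix.vecHead, Matrix.vecTail, Matrix.cons_val_two]
  rw [psi, hf1, hf2]

theorem finrank_sl3 : Module.finrank K (sl (Fin 3) K) = 8 := by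
  have h9 : Module.finrank K (Matrix (Fin 3) (Fin 3) K) = 9 := by
    rw [Module.finrank_matrix]
    simp
  have hsur : Function.Surjective (Matrix.traceLinearMap (Fin 3) K K) := fun c =>
    ⟨Matrix.single 0 0 c, (Matrix.trace_single_eq_same (0 : Fin 3) c : _)⟩
  have hrn := LinearMap.finrank_range_add_finrank_ker (Matrix.traceLinearMap (Fin 3) K K)
  rw [LinearMap.range_eq_top.mpr hsur, finrank_top, h9, Module.finrank_self] at hrn
  have heq : Module.finrank K (sl (Fin 3) K) =
      Module.finrank K (LinearMap.ker (Matrix.traceLinearMap (Fin 3) K K)) := rfl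
  omega

end Sl3Aux

set_option maxHeartbeats 4000000 in
theorem sl3DerivationSpan_eq (K : Type) [Field K] [CharZero K]
    (D₁ D₂ : Derivation K (Sl3Aux.FF K) (Sl3Aux.FF K)) :
    sl3DerivationSpan K D₁ D₂ = Submodule.span K
      {D₁, D₂, Sl3Aux.xx K 0 • D₁, Sl3Aux.xx K 1 • D₂, Sl3Aux.xx K 0 • D₂, Sl3Aux.xx K 1 • D₁,
        (Sl3Aux.xx K 0 ^ 2) • D₁ + (Sl3Aux.xx K 0 * Sl3Aux.xx K 1) • D₂,
        (Sl3Aux.xx K 0 * Sl3Aux.xx K 1) • D₁ + (Sl3Aux.xx K 1 ^ 2) • D₂} := rfl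

set_option maxHeartbeats 4000000 in
/-- Let `K` be a field of characteristic `0`, `F = K(x₁, x₂)` the field of rational functions in
two variables over `K`, and `∂₁, ∂₂ ∈ Der_K(F)` the `K`-derivations of `F` extending the partial
derivatives of the polynomial ring.  Then the `K`-linear span of the eight derivations `∂₁`,
`∂₂`, `x₁ • ∂₁`, `x₂ • ∂₂`, `x₁ • ∂₂`, `x₂ • ∂₁`, `x₁² • ∂₁ + x₁x₂ • ∂₂`, `x₁x₂ • ∂₁ + x₂² • ∂₂`
is a Lie subalgebra of `Der_K(F)` of dimension `8` over `K` isomorphic, as a Lie algebra over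
`K`, to `sl₃(K)`; consequently there is an injective homomorphism of Lie algebras over `K` from
`sl₃(K)` into `Der_K(F)`. -/
theorem sl3_span_of_derivations
    (K : Type) [Field K] [CharZero K]
    (D₁ D₂ : Derivation K (FractionRing (MvPolynomial (Fin 2) K))
      (FractionRing (MvPolynomial (Fin 2) K)))
    (h₁ : ∀ p : MvPolynomial (Fin 2) K,
      D₁ (algebraMap (MvPolynomial (Fin 2) K) (FractionRing (MvPolynomial (Fin 2) K)) p) =
        algebraMap (MvPolynomial (Fin 2) K) (FractionRing (MvPolynomial (Fin 2) K))
          (MvPolynomial.pderiv 0 p))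
    (h₂ : ∀ p : MvPolynomial (Fin 2) K,
      D₂ (algebraMap (MvPolynomial (Fin 2) K) (FractionRing (MvPolynomial (Fin 2) K)) p) =
        algebraMap (MvPolynomial (Fin 2) K) (FractionRing (MvPolynomial (Fin 2) K))
          (MvPolynomial.pderiv 1 p)) :
    (∀ a ∈ sl3DerivationSpan K D₁ D₂, ∀ b ∈ sl3DerivationSpan K D₁ D₂,
      ⁅a, b⁆ ∈ sl3DerivationSpan K D₁ D₂) ∧
    Module.finrank K (sl3DerivationSpan K D₁ D₂) = 8 ∧
    ∃ ψ : LieAlgebra.SpecialLinear.sl (Fin 3) K →ₗ⁅K⁆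
        Derivation K (FractionRing (MvPolynomial (Fin 2) K))
          (FractionRing (MvPolynomial (Fin 2) K)),
      Function.Injective ψ ∧
      Set.range (ψ : LieAlgebra.SpecialLinear.sl (Fin 3) K →
          Derivation K (FractionRing (MvPolynomial (Fin 2) K))
            (FractionRing (MvPolynomial (Fin 2) K)))
        = (sl3DerivationSpan K D₁ D₂ : Set (Derivation K (FractionRing (MvPolynomial (Fin 2) K))
            (FractionRing (MvPolynomial (Fin 2) K)))) := by
  classical
  open LieAlgebra.SpecialLinear in
  let Ψ : sl (Fin 3) K →ₗ⁅K⁆ Derivation K (Sl3Aux.FF K) (Sl3Aux.FF K) :=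
    Sl3Aux.psiSl K D₁ D₂ h₁ h₂
  have hψval : ∀ A : sl (Fin 3) K, Ψ A = Sl3Aux.psi K D₁ D₂ A.val := fun _ => rfl
  -- every value of Ψ lies in the span
  have hmem : ∀ A : sl (Fin 3) K, Ψ A ∈ sl3DerivationSpan K D₁ D₂ := by
    intro A
    rw [hψval, Sl3Aux.psi_combo K D₁ D₂ h₁ h₂ A.val, sl3DerivationSpan_eq]
    have sm : ∀ g ∈ ({D₁, D₂, Sl3Aux.xx K 0 • D₁, Sl3Aux.xx K 1 • D₂, Sl3Aux.xx K 0 • D₂,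
        Sl3Aux.xx K 1 • D₁,
        (Sl3Aux.xx K 0 ^ 2) • D₁ + (Sl3Aux.xx K 0 * Sl3Aux.xx K 1) • D₂,
        (Sl3Aux.xx K 0 * Sl3Aux.xx K 1) • D₁ + (Sl3Aux.xx K 1 ^ 2) • D₂} :
          Set (Derivation K (Sl3Aux.FF K) (Sl3Aux.FF K))), ∀ k : K,
        k • g ∈ Submodule.span K ({D₁, D₂, Sl3Aux.xx K 0 • D₁, Sl3Aux.xx K 1 • D₂,
          Sl3Aux.xx K 0 • D₂, Sl3Aux.xx K 1 • D₁,
          (Sl3Aux.xx K 0 ^ 2) • D₁ + (Sl3Aux.xx K 0 * Sl3Aux.xx K 1) • D₂,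
          (Sl3Aux.xx K 0 * Sl3Aux.xx K 1) • D₁ + (Sl3Aux.xx K 1 ^ 2) • D₂} :
            Set (Derivation K (Sl3Aux.FF K) (Sl3Aux.FF K))) :=
      fun g hg k => Submodule.smul_mem _ _ (Submodule.subset_span hg)
    refine add_mem (add_mem (add_mem (add_mem (add_mem (add_mem (add_mem
      (sm _ (by simp) _) (sm _ (by simp) _)) (sm _ (by simp) _)) (sm _ (by simp) _))
      (sm _ (by simp) _)) (sm _ (by simp) _)) (sm _ (by simp) _) ) (sm _ (by simp) _)
  -- the span is contained in the range
  have hle : sl3DerivationSpan K D₁ D₂ ≤ LinearMap.range Ψ.toLinearMap := by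
    rw [sl3DerivationSpan_eq, Submodule.span_le]
    rintro d hd
    simp only [Set.mem_insert_iff, Set.mem_singleton_iff] at hd
    rcases hd with rfl|rfl|rfl|rfl|rfl|rfl|rfl|rfl
    · exact ⟨⟨_, (by norm_num [Matrix.trace, Fin.sum_univ_three, Matrix.vecHead,
        Matrix.vecTail, Matrix.cons_val_two] : Matrix.trace (!![0,0,0;-1,0,0;0,0,0] : Matrix (Fin 3) (Fin 3) K) = 0)⟩,
        Sl3Aux.psi_g1 K _ _⟩
    · exact ⟨⟨_, (by norm_num [Matrix.trace, Fin.sum_univ_three, Matrix.vecHead,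
        Matrix.vecTail, Matrix.cons_val_two] : Matrix.trace (!![0,0,0;0,0,0;-1,0,0] : Matrix (Fin 3) (Fin 3) K) = 0)⟩,
        Sl3Aux.psi_g2 K _ _⟩
    · exact ⟨⟨_, (by norm_num [Matrix.trace, Fin.sum_univ_three, Matrix.vecHead,
        Matrix.vecTail, Matrix.cons_val_two] :
          Matrix.trace (!![1/3,0,0;0,-2/3,0;0,0,1/3] : Matrix (Fin 3) (Fin 3) K) = 0)⟩,
        Sl3Aux.psi_g3 K _ _⟩
    · exact ⟨⟨_, (by norm_num [Matrix.trace, Fin.sum_univ_three, Matrix.vecHead,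
        Matrix.vecTail, Matrix.cons_val_two] :
          Matrix.trace (!![1/3,0,0;0,1/3,0;0,0,-2/3] : Matrix (Fin 3) (Fin 3) K) = 0)⟩,
        Sl3Aux.psi_g4 K _ _⟩
    · exact ⟨⟨_, (by norm_num [Matrix.trace, Fin.sum_univ_three, Matrix.vecHead,
        Matrix.vecTail, Matrix.cons_val_two] : Matrix.trace (!![0,0,0;0,0,0;0,-1,0] : Matrix (Fin 3) (Fin 3) K) = 0)⟩,
        Sl3Aux.psi_g5 K _ _⟩
    · exact ⟨⟨_, (by norm_num [Matrix.trace, Fin.sum_univ_three, Matrix.vecHead,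
        Matrix.vecTail, Matrix.cons_val_two] : Matrix.trace (!![0,0,0;0,0,-1;0,0,0] : Matrix (Fin 3) (Fin 3) K) = 0)⟩,
        Sl3Aux.psi_g6 K _ _⟩
    · exact ⟨⟨_, (by norm_num [Matrix.trace, Fin.sum_univ_three, Matrix.vecHead,
        Matrix.vecTail, Matrix.cons_val_two] : Matrix.trace (!![0,1,0;0,0,0;0,0,0] : Matrix (Fin 3) (Fin 3) K) = 0)⟩,
        Sl3Aux.psi_g7 K _ _⟩
    · exact ⟨⟨_, (by norm_num [Matrix.trace, Fin.sum_univ_three, Matrix.vecHead,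
        Matrix.vecTail, Matrix.cons_val_two] : Matrix.trace (!![0,0,1;0,0,0;0,0,0] : Matrix (Fin 3) (Fin 3) K) = 0)⟩,
        Sl3Aux.psi_g8 K _ _⟩
  have hrange : Set.range ⇑Ψ = (sl3DerivationSpan K D₁ D₂ : Set _) := by
    apply Set.Subset.antisymm
    · rintro _ ⟨A, rfl⟩
      exact hmem A
    · intro d hd
      obtain ⟨A, hA⟩ := hle hd
      exact ⟨A, hA⟩
  have hinj : Function.Injective ⇑Ψ := by
    intro A B hAB
    have hz : Ψ.toLinearMap (A - B) = 0 := by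
      rw [map_sub]
      show Ψ A - Ψ B = 0
      rw [hAB, sub_self]
    have h0 : (A - B).val = 0 :=
      Sl3Aux.psi_inj K D₁ D₂ h₁ h₂ (A - B).val ((A - B).property) hz
    have : A - B = 0 := Subtype.ext h0
    exact sub_eq_zero.mp this
  refine ⟨?_, ?_, Ψ, hinj, hrange⟩
  · intro a ha b hb
    have ha' : a ∈ Set.range ⇑Ψ := by rw [hrange]; exact ha
    have hb' : b ∈ Set.range ⇑Ψ := by rw [hrange]; exact hb
    obtain ⟨A, rfl⟩ := ha'
    obtain ⟨B, rfl⟩ := hb'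
    rw [← Ψ.map_lie]
    exact hmem _
  · have hr : LinearMap.range Ψ.toLinearMap = sl3DerivationSpan K D₁ D₂ := by
      apply SetLike.coe_injective
      rw [LinearMap.coe_range, LieHom.coe_toLinearMap]
      exact hrange
    have hinj' : Function.Injective ⇑Ψ.toLinearMap := by
      rw [LieHom.coe_toLinearMap]; exact hinj
    rw [← hr, LinearMap.finrank_range_of_inj hinj', Sl3Aux.finrank_sl3]
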